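/- Suppose ℓ satisfies the Metric Loss Assumption and the Gradual Shift assumption GS(a, b, ε, s) holds for a measurable classifier f ∈ H. If R_p(f) < b, then f witnesses the Close Conditionals assumption CC(κ) with κ = b + ε · (a/2) · s · (s + 1); in particular, max_{y ∈ Y} W_{1,ℓ}(f#p_{x|y}(·|y), f#q_{x|y}(·|y)) < ε · (a/2) · s · (s + 1). -/

import Mathlib

open MeasureTheory ProbabilityTheory
open scoped ENNReal

/-- A coupling of `μ` and `ν`: a joint measure on the product with the given marginals. -/
def IsCoupling {A B : Type*} [MeasurableSpace A] [MeasurableSpace B]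
    (γ : Measure (A × B)) (μ : Measure A) (ν : Measure B) : Prop :=
  γ.map Prod.fst = μ ∧ γ.map Prod.snd = ν

/-- The `α`-Wasserstein distance between `μ` and `ν` with cost function `c`:
`W_{α,c}(μ,ν) = (inf_{γ ∈ Γ(μ,ν)} ∫ c^α dγ)^{1/α}`. -/
noncomputable def Wass {A B : Type*} [MeasurableSpace A] [MeasurableSpace B]
    (α : ℝ) (c : A × B → ℝ) (μ : Measure A) (ν : Measure B) : ℝ :=
  sInf { r | ∃ γ : Measure (A × B), IsCoupling γ μ ν ∧ r = ∫ z, c z ^ α ∂γ } ^ (1 / α)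

/-- The 1-Wasserstein distance between `μ` and `ν` with cost function `c`. -/
noncomputable def W1 {A B : Type*} [MeasurableSpace A] [MeasurableSpace B]
    (c : A × B → ℝ) (μ : Measure A) (ν : Measure B) : ℝ :=
  sInf { r | ∃ γ : Measure (A × B), IsCoupling γ μ ν ∧ r = ∫ z, c z ∂γ }

/-- The risk of classifier `f` under joint distribution `p`, w.r.t. loss `ℓ`. -/
noncomputable def risk {X Y : Type*} [MeasurableSpace X] [MeasurableSpace Y]
    (ℓ : Y × Y → ℝ) (f : X → Y) (p : Measure (X × Y)) : ℝ :=
  ∫ z, ℓ (f z.1, z.2) ∂p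

/-- `f#p` : pushforward of a joint measure `p` under `(x, y) ↦ (f x, y)`. -/
noncomputable def jmap {X Y : Type*} [MeasurableSpace X] [MeasurableSpace Y]
    (f : X → Y) (p : Measure (X × Y)) : Measure (Y × Y) :=
  p.map (fun z => (f z.1, z.2))

instance jmap.instIsFiniteMeasure {X Y : Type*} [MeasurableSpace X] [MeasurableSpace Y]
    (f : X → Y) (p : Measure (X × Y)) [IsFiniteMeasure p] : IsFiniteMeasure (jmap f p) := by
  unfold jmap; infer_instance

section Helpers

variable {α : Type*} [MeasurableSpace α] [MeasurableSingletonClass α]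

lemma meas_finset (μ : Measure α) (s : Finset α) : ∑ b ∈ s, μ {b} = μ ↑s := by
  have := MeasureTheory.sum_measure_preimage_singleton (μ := μ) s
    (f := id) (fun y _ => by simp)
  simpa using this

lemma sum_fiber_fst {β : Type*} [MeasurableSpace β] [MeasurableSingletonClass β]
    [Fintype β] (γ : Measure (α × β)) (x : α) :
    ∑ y : β, γ {(x, y)} = γ.map Prod.fst {x} := by
  classical
  rw [Measure.map_apply measurable_fst (measurableSet_singleton x)]
  have h : (Prod.fst ⁻¹' {x} : Set (α × β)) = ↑(Finset.univ.image fun y : β => (x, y)) := by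
    ext p
    simp [Prod.ext_iff, eq_comm]
  rw [h, ← meas_finset, Finset.sum_image]
  intro y1 _ y2 _ h'
  exact (Prod.mk.injEq _ _ _ _).mp h' |>.2

lemma sum_fiber_snd {β : Type*} [MeasurableSpace β] [MeasurableSingletonClass β]
    [Fintype α] (γ : Measure (α × β)) (y : β) :
    ∑ x : α, γ {(x, y)} = γ.map Prod.snd {y} := by
  classical
  rw [Measure.map_apply measurable_snd (measurableSet_singleton y)]
  have h : (Prod.snd ⁻¹' {y} : Set (α × β)) = ↑(Finset.univ.image fun x : α => (x, y)) := by
    ext p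
    simp [Prod.ext_iff, eq_comm]
  rw [h, ← meas_finset, Finset.sum_image]
  intro x1 _ x2 _ h'
  exact (Prod.mk.injEq _ _ _ _).mp h' |>.1

lemma measure_eq_sum_dirac [Fintype α] (μ : Measure α) :
    ∑ x : α, μ {x} • Measure.dirac x = μ := by
  classical
  ext s hs
  rw [Measure.finset_sum_apply]
  have : ∀ x : α, (μ {x} • Measure.dirac x) s = if x ∈ s then μ {x} else 0 := by
    intro x
    rw [Measure.smul_apply, Measure.dirac_apply' x hs, smul_eq_mul]
    by_cases hx : x ∈ s <;> simp [Set.indicator, hx]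
  simp_rw [this]
  rw [← Finset.sum_filter]
  have hcoe : ↑(Finset.univ.filter (· ∈ s)) = s := by
    ext x; simp
  rw [meas_finset, hcoe]

end Helpers

section More

lemma map_finset_sum_measure {α β ι : Type*} [MeasurableSpace α] [MeasurableSpace β]
    {g : α → β} (hg : Measurable g) (t : Finset ι) (μ : ι → Measure α) :
    (∑ i ∈ t, μ i).map g = ∑ i ∈ t, (μ i).map g := by
  ext s hs
  rw [Measure.map_apply hg hs, Measure.finset_sum_apply, Measure.finset_sum_apply]
  refine Finset.sum_congr rfl fun i _ => ?_
  rw [Measure.map_apply hg hs]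

lemma IsCoupling.probMeasure {A B : Type*} [MeasurableSpace A] [MeasurableSpace B]
    {γ : Measure (A × B)} {μ : Measure A} {ν : Measure B}
    (h : IsCoupling γ μ ν) [IsProbabilityMeasure μ] : IsProbabilityMeasure γ := by
  constructor
  have : γ (Prod.fst ⁻¹' Set.univ) = μ Set.univ := by
    rw [← Measure.map_apply measurable_fst MeasurableSet.univ, h.1]
  simpa using this

lemma W1_nonneg {A B : Type*} [MeasurableSpace A] [MeasurableSpace B]
    {c : A × B → ℝ} (hc : ∀ p, 0 ≤ c p) (μ : Measure A) (ν : Measure B) :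
    0 ≤ W1 c μ ν := by
  apply Real.sInf_nonneg
  rintro r ⟨γ, -, rfl⟩
  exact integral_nonneg fun z => hc z

lemma W1_le_cost {A B : Type*} [MeasurableSpace A] [MeasurableSpace B]
    {c : A × B → ℝ} (hc : ∀ p, 0 ≤ c p) {μ : Measure A} {ν : Measure B}
    {γ : Measure (A × B)} (hγ : IsCoupling γ μ ν) :
    W1 c μ ν ≤ ∫ z, c z ∂γ := by
  refine csInf_le ⟨0, ?_⟩ ⟨γ, hγ, rfl⟩
  rintro r ⟨γ', -, rfl⟩
  exact integral_nonneg fun z => hc z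

lemma exists_coupling_of_W1_lt {A B : Type*} [MeasurableSpace A] [MeasurableSpace B]
    {c : A × B → ℝ} {μ : Measure A} {ν : Measure B} {e : ℝ}
    [IsProbabilityMeasure μ] [IsProbabilityMeasure ν]
    (h : W1 c μ ν < e) :
    ∃ γ : Measure (A × B), IsCoupling γ μ ν ∧ ∫ z, c z ∂γ < e := by
  have hne : { r | ∃ γ : Measure (A × B), IsCoupling γ μ ν ∧ r = ∫ z, c z ∂γ }.Nonempty := by
    refine ⟨∫ z, c z ∂(μ.prod ν), μ.prod ν, ⟨?_, ?_⟩, rfl⟩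
    · exact Measure.fst_prod
    · exact Measure.snd_prod
  obtain ⟨r, ⟨γ, hγ, rfl⟩, hr⟩ := exists_lt_of_csInf_lt hne h
  exact ⟨γ, hγ, hr⟩

lemma sum_Icc_cast_real (s : ℕ) : ∑ i ∈ Finset.Icc 1 s, (i : ℝ) = s * (s + 1) / 2 := by
  induction s with
  | zero => simp
  | succ n ih =>
    rw [Finset.sum_Icc_succ_top (by omega)]
    push_cast
    rw [ih]
    ring

end More

lemma glue_coupling {α : Type*} [MeasurableSpace α] [Fintype α] [MeasurableSingletonClass α]
    (ℓ : α × α → ℝ) (hnn : ∀ p, 0 ≤ ℓ p)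
    (htri : ∀ x y z : α, ℓ (x, z) ≤ ℓ (x, y) + ℓ (y, z))
    (μ ν ρ : Measure α) [IsProbabilityMeasure μ] [IsProbabilityMeasure ν]
    (γ₁ γ₂ : Measure (α × α)) (h1 : IsCoupling γ₁ μ ν) (h2 : IsCoupling γ₂ ν ρ) :
    ∃ γ : Measure (α × α), IsCoupling γ μ ρ ∧
      ∫ z, ℓ z ∂γ ≤ ∫ z, ℓ z ∂γ₁ + ∫ z, ℓ z ∂γ₂ := by
  classical
  haveI hγ₁p : IsProbabilityMeasure γ₁ := h1.probMeasure
  haveI hγ₂p : IsProbabilityMeasure γ₂ := h2.probMeasure (μ := ν)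
  -- basic bounds
  have k1 : ∀ x y : α, γ₁ {(x, y)} ≤ ν {y} := by
    intro x y
    calc γ₁ {(x, y)} ≤ γ₁ (Prod.snd ⁻¹' {y}) := by
          apply measure_mono
          rintro p hp
          rw [Set.mem_singleton_iff] at hp
          subst hp; simp
      _ = ν {y} := by
          rw [← Measure.map_apply measurable_snd (measurableSet_singleton y), h1.2]
  have k2 : ∀ y z : α, γ₂ {(y, z)} ≤ ν {y} := by
    intro y z
    calc γ₂ {(y, z)} ≤ γ₂ (Prod.fst ⁻¹' {y}) := by
          apply measure_mono
          rintro p hp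
          rw [Set.mem_singleton_iff] at hp
          subst hp; simp
      _ = ν {y} := by
          rw [← Measure.map_apply measurable_fst (measurableSet_singleton y), h2.1]
  have k3 : ∀ y : α, ν {y} ≠ ∞ := fun y => (measure_lt_top ν _).ne
  set T : α → α → α → ℝ≥0∞ := fun x y z => γ₁ {(x, y)} * (γ₂ {(y, z)} / ν {y}) with hT
  -- row sums
  have row : ∀ x y : α, ∑ z : α, T x y z = γ₁ {(x, y)} := by
    intro x y
    by_cases h0 : ν {y} = 0
    · have hz : γ₁ {(x, y)} = 0 := le_antisymm (h0 ▸ k1 x y) zero_le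
      simp [hT, hz]
    · have e1 : ∑ z : α, T x y z = γ₁ {(x, y)} * ((∑ z : α, γ₂ {(y, z)}) / ν {y}) := by
        simp only [hT, div_eq_mul_inv, ← Finset.mul_sum, ← Finset.sum_mul]
      rw [e1, sum_fiber_fst, h2.1, ENNReal.div_self h0 (k3 y), mul_one]
  -- column sums
  have col : ∀ y z : α, ∑ x : α, T x y z = γ₂ {(y, z)} := by
    intro y z
    by_cases h0 : ν {y} = 0
    · have hz : γ₂ {(y, z)} = 0 := le_antisymm (h0 ▸ k2 y z) zero_le
      have hz1 : ∀ x, γ₁ {(x, y)} = 0 := fun x => le_antisymm (h0 ▸ k1 x y) zero_le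
      simp [hT, hz, hz1]
    · have e1 : ∑ x : α, T x y z = (∑ x : α, γ₁ {(x, y)}) * (γ₂ {(y, z)} / ν {y}) := by
        simp only [hT, ← Finset.sum_mul]
      rw [e1, sum_fiber_snd, h1.2, ENNReal.mul_div_cancel h0 (k3 y)]
  have Tfin : ∀ x y z : α, T x y z ≠ ∞ := by
    intro x y z
    by_cases h0 : ν {y} = 0
    · have hz : γ₁ {(x, y)} = 0 := le_antisymm (h0 ▸ k1 x y) zero_le
      simp [hT, hz]
    · exact ENNReal.mul_ne_top (measure_lt_top _ _).ne
        (ENNReal.div_lt_top (measure_lt_top _ _).ne h0).ne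
  set w : α × α → ℝ≥0∞ := fun pz => ∑ y : α, T pz.1 y pz.2 with hw
  have wfin : ∀ p : α × α, w p ≠ ∞ := by
    intro p
    rw [hw]
    exact (ENNReal.sum_lt_top.mpr fun y _ => (Tfin p.1 y p.2).lt_top).ne
  set γ : Measure (α × α) := ∑ p : α × α, w p • Measure.dirac p with hγ
  haveI : ∀ p : α × α, IsFiniteMeasure (w p • Measure.dirac p) := by
    intro p
    constructor
    rw [Measure.smul_apply, smul_eq_mul]
    exact ENNReal.mul_lt_top (wfin p).lt_top (by simp)
  -- first marginal
  have hfst : γ.map Prod.fst = μ := by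
    rw [hγ, map_finset_sum_measure measurable_fst]
    have e1 : ∀ p : α × α, (w p • Measure.dirac p).map Prod.fst = w p • Measure.dirac p.1 := by
      intro p
      rw [Measure.map_smul, Measure.map_dirac' measurable_fst]
    simp_rw [e1]
    rw [Fintype.sum_prod_type]
    have e2 : ∀ x : α, ∑ z : α, w (x, z) • Measure.dirac x = μ {x} • Measure.dirac x := by
      intro x
      rw [← Finset.sum_smul]
      congr 1
      calc ∑ z : α, w (x, z) = ∑ z : α, ∑ y : α, T x y z := rfl
        _ = ∑ y : α, ∑ z : α, T x y z := Finset.sum_comm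
        _ = ∑ y : α, γ₁ {(x, y)} := by simp_rw [row]
        _ = μ {x} := by rw [sum_fiber_fst, h1.1]
    simp_rw [e2]
    exact measure_eq_sum_dirac μ
  -- second marginal
  have hsnd : γ.map Prod.snd = ρ := by
    rw [hγ, map_finset_sum_measure measurable_snd]
    have e1 : ∀ p : α × α, (w p • Measure.dirac p).map Prod.snd = w p • Measure.dirac p.2 := by
      intro p
      rw [Measure.map_smul, Measure.map_dirac' measurable_snd]
    simp_rw [e1]
    rw [Fintype.sum_prod_type]
    rw [Finset.sum_comm]
    have e2 : ∀ z : α, ∑ x : α, w (x, z) • Measure.dirac z = ρ {z} • Measure.dirac z := by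
      intro z
      rw [← Finset.sum_smul]
      congr 1
      calc ∑ x : α, w (x, z) = ∑ x : α, ∑ y : α, T x y z := rfl
        _ = ∑ y : α, ∑ x : α, T x y z := Finset.sum_comm
        _ = ∑ y : α, γ₂ {(y, z)} := by simp_rw [col]
        _ = ρ {z} := by rw [sum_fiber_snd, h2.2]
    simp_rw [e2]
    exact measure_eq_sum_dirac ρ
  refine ⟨γ, ⟨hfst, hsnd⟩, ?_⟩
  -- cost computation
  have hcostγ : ∫ z, ℓ z ∂γ = ∑ p : α × α, (w p).toReal * ℓ p := by
    rw [hγ, integral_finset_sum_measure (fun p _ => Integrable.of_finite)]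
    refine Finset.sum_congr rfl fun p _ => ?_
    rw [integral_smul_measure, integral_dirac, smul_eq_mul]
  haveI : IsFiniteMeasure γ₁ := ⟨by rw [hγ₁p.measure_univ]; exact ENNReal.one_lt_top⟩
  haveI : IsFiniteMeasure γ₂ := ⟨by rw [hγ₂p.measure_univ]; exact ENNReal.one_lt_top⟩
  have hcost1 : ∫ z, ℓ z ∂γ₁ = ∑ x : α, ∑ y : α, (γ₁ {(x, y)}).toReal * ℓ (x, y) := by
    rw [integral_fintype (μ := γ₁) (Integrable.of_finite (μ := γ₁) (f := ℓ)), Fintype.sum_prod_type]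
    simp [smul_eq_mul, measureReal_def]
  have hcost2 : ∫ z, ℓ z ∂γ₂ = ∑ y : α, ∑ z : α, (γ₂ {(y, z)}).toReal * ℓ (y, z) := by
    rw [integral_fintype (μ := γ₂) (Integrable.of_finite (μ := γ₂) (f := ℓ)), Fintype.sum_prod_type]
    simp [smul_eq_mul, measureReal_def]
  rw [hcostγ, hcost1, hcost2]
  have expand : ∑ p : α × α, (w p).toReal * ℓ p
      = ∑ x : α, ∑ z : α, ∑ y : α, (T x y z).toReal * ℓ (x, z) := by
    rw [Fintype.sum_prod_type]
    refine Finset.sum_congr rfl fun x _ => Finset.sum_congr rfl fun z _ => ?_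
    rw [hw]
    rw [ENNReal.toReal_sum (fun y _ => Tfin x y z), Finset.sum_mul]
  rw [expand]
  have step : ∑ x : α, ∑ z : α, ∑ y : α, (T x y z).toReal * ℓ (x, z)
      ≤ ∑ x : α, ∑ z : α, ∑ y : α, (T x y z).toReal * (ℓ (x, y) + ℓ (y, z)) := by
    refine Finset.sum_le_sum fun x _ => Finset.sum_le_sum fun z _ =>
      Finset.sum_le_sum fun y _ => ?_
    exact mul_le_mul_of_nonneg_left (htri x y z) ENNReal.toReal_nonneg
  refine step.trans (le_of_eq ?_)
  have split : ∑ x : α, ∑ z : α, ∑ y : α, (T x y z).toReal * (ℓ (x, y) + ℓ (y, z))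
      = (∑ x : α, ∑ z : α, ∑ y : α, (T x y z).toReal * ℓ (x, y))
        + ∑ x : α, ∑ z : α, ∑ y : α, (T x y z).toReal * ℓ (y, z) := by
    simp_rw [mul_add, Finset.sum_add_distrib]
  rw [split]
  congr 1
  · -- first part equals cost of γ₁
    calc ∑ x : α, ∑ z : α, ∑ y : α, (T x y z).toReal * ℓ (x, y)
        = ∑ x : α, ∑ y : α, ∑ z : α, (T x y z).toReal * ℓ (x, y) := by
          refine Finset.sum_congr rfl fun x _ => Finset.sum_comm
      _ = ∑ x : α, ∑ y : α, (γ₁ {(x, y)}).toReal * ℓ (x, y) := by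
          refine Finset.sum_congr rfl fun x _ => Finset.sum_congr rfl fun y _ => ?_
          rw [← Finset.sum_mul, ← ENNReal.toReal_sum (fun z _ => Tfin x y z), row]
  · -- second part equals cost of γ₂
    calc ∑ x : α, ∑ z : α, ∑ y : α, (T x y z).toReal * ℓ (y, z)
        = ∑ z : α, ∑ x : α, ∑ y : α, (T x y z).toReal * ℓ (y, z) := Finset.sum_comm
      _ = ∑ z : α, ∑ y : α, ∑ x : α, (T x y z).toReal * ℓ (y, z) := by
          refine Finset.sum_congr rfl fun z _ => Finset.sum_comm
      _ = ∑ y : α, ∑ z : α, ∑ x : α, (T x y z).toReal * ℓ (y, z) := Finset.sum_comm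
      _ = ∑ y : α, ∑ z : α, (γ₂ {(y, z)}).toReal * ℓ (y, z) := by
          refine Finset.sum_congr rfl fun y _ => Finset.sum_congr rfl fun z _ => ?_
          rw [← Finset.sum_mul, ← ENNReal.toReal_sum (fun x _ => Tfin x y z), col]


theorem statement16 {X Y : Type*} [MeasurableSpace X] [StandardBorelSpace X] [Nonempty X]
    [MeasurableSpace Y] [Fintype Y] [MeasurableSingletonClass Y] [Nonempty Y]
    (ℓ : Y × Y → ℝ) (hℓmeas : Measurable ℓ)
    (hsymm : ∀ y y' : Y, ℓ (y, y') = ℓ (y', y))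
    (hnonneg : ∀ y y' : Y, 0 ≤ ℓ (y, y'))
    (htri : ∀ y₁ y₂ y₃ : Y, ℓ (y₁, y₃) ≤ ℓ (y₁, y₂) + ℓ (y₂, y₃))
    (hid : ∀ y y' : Y, ℓ (y, y') = 0 ↔ y = y')
    (p q : Measure (X × Y)) [IsProbabilityMeasure p] [IsProbabilityMeasure q]
    (f : X → Y) (hf : Measurable f)
    (a b ε : ℝ) (s : ℕ)
    (hGS : risk ℓ f p < b →
      ∃ (Q : ℕ → Y → Measure X) (r : ℕ → ℝ),
        (∀ y : Y, Q 0 y = (p.map Prod.swap).condKernel y) ∧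
        (∀ i ∈ Finset.Icc 1 s, ∀ y : Y, IsProbabilityMeasure (Q i y)) ∧
        (∀ i ∈ Finset.Icc 1 s, 0 ≤ r i ∧ r i ≤ a) ∧
        (∑ i ∈ Finset.Icc 1 s, r i = 1) ∧
        (∀ y : Y, (q.map Prod.swap).condKernel y =
          ∑ i ∈ Finset.Icc 1 s, ENNReal.ofReal (r i) • Q i y) ∧
        (∀ i ∈ Finset.Icc 1 s, ∀ y : Y,
          W1 ℓ ((Q (i - 1) y).map f) ((Q i y).map f) < ε))
    (hb : risk ℓ f p < b) :
    risk ℓ f p +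
        (⨆ y : Y, W1 ℓ (((p.map Prod.swap).condKernel y).map f)
          (((q.map Prod.swap).condKernel y).map f)) <
        b + ε * (a / 2) * (s : ℝ) * ((s : ℝ) + 1) ∧
      (⨆ y : Y, W1 ℓ (((p.map Prod.swap).condKernel y).map f)
        (((q.map Prod.swap).condKernel y).map f)) <
        ε * (a / 2) * (s : ℝ) * ((s : ℝ) + 1) := by
  classical
  obtain ⟨Q, r, hQ0, hQprob, hr, hrsum, hqdec, hW⟩ := hGS hb
  haveI hpswap : IsProbabilityMeasure (p.map Prod.swap) :=
    Measure.isProbabilityMeasure_map measurable_swap.aemeasurable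
  haveI hqswap : IsProbabilityMeasure (q.map Prod.swap) :=
    Measure.isProbabilityMeasure_map measurable_swap.aemeasurable
  have hs1 : 1 ≤ s := by
    by_contra h
    push_neg at h
    have hs0 : s = 0 := by omega
    subst hs0
    simp at hrsum
  have hQ0prob : ∀ y : Y, IsProbabilityMeasure (Q 0 y) := by
    intro y; rw [hQ0 y]; infer_instance
  have hQiprob : ∀ i, i ≤ s → ∀ y, IsProbabilityMeasure (Q i y) := by
    intro i hi y
    rcases Nat.eq_zero_or_pos i with h0 | h1
    · subst h0; exact hQ0prob y
    · exact hQprob i (Finset.mem_Icc.mpr ⟨h1, hi⟩) y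
  have hmapprob : ∀ i, i ≤ s → ∀ y, IsProbabilityMeasure ((Q i y).map f) := by
    intro i hi y
    haveI := hQiprob i hi y
    exact Measure.isProbabilityMeasure_map hf.aemeasurable
  have hℓnn : ∀ p : Y × Y, 0 ≤ ℓ p := fun p => hnonneg p.1 p.2
  have hε : 0 < ε := by
    obtain ⟨y⟩ := ‹Nonempty Y›
    exact lt_of_le_of_lt (W1_nonneg hℓnn _ _)
      (hW 1 (Finset.mem_Icc.mpr ⟨le_refl 1, hs1⟩) y)
  set B : ℝ := ε * (a / 2) * (s : ℝ) * ((s : ℝ) + 1) with hB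
  have key : ∀ y : Y,
      W1 ℓ (((p.map Prod.swap).condKernel y).map f)
        (((q.map Prod.swap).condKernel y).map f) < B := by
    intro y
    have chain : ∀ i : ℕ, 1 ≤ i → i ≤ s →
        ∃ γ : Measure (Y × Y), IsCoupling γ ((Q 0 y).map f) ((Q i y).map f) ∧
          ∫ z, ℓ z ∂γ < (i : ℝ) * ε := by
      intro i h1i
      induction i, h1i using Nat.le_induction with
      | base =>
        intro _
        haveI := hmapprob 0 (Nat.zero_le s) y
        haveI := hmapprob 1 hs1 y
        obtain ⟨γ, hγ, hc⟩ := exists_coupling_of_W1_lt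
          (hW 1 (Finset.mem_Icc.mpr ⟨le_refl 1, hs1⟩) y)
        exact ⟨γ, by simpa using hγ, by simpa using hc⟩
      | succ i hi ih =>
        intro his
        have hi_le : i ≤ s := by omega
        obtain ⟨γ₁, hγ₁, hc₁⟩ := ih hi_le
        haveI := hmapprob i hi_le y
        haveI := hmapprob (i + 1) his y
        haveI := hmapprob 0 (Nat.zero_le s) y
        have hWs := hW (i + 1) (Finset.mem_Icc.mpr ⟨by omega, his⟩) y
        rw [show i + 1 - 1 = i from rfl] at hWs
        obtain ⟨γ₂, hγ₂, hc₂⟩ := exists_coupling_of_W1_lt hWs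
        obtain ⟨γ, hγ, hcγ⟩ := glue_coupling ℓ hℓnn htri
          ((Q 0 y).map f) ((Q i y).map f) ((Q (i + 1) y).map f) γ₁ γ₂ hγ₁ hγ₂
        refine ⟨γ, hγ, ?_⟩
        calc ∫ z, ℓ z ∂γ ≤ ∫ z, ℓ z ∂γ₁ + ∫ z, ℓ z ∂γ₂ := hcγ
          _ < (i : ℝ) * ε + ε := add_lt_add hc₁ hc₂
          _ = ((i + 1 : ℕ) : ℝ) * ε := by push_cast; ring
    have Hall : ∀ i : ℕ, ∃ γ : Measure (Y × Y), i ∈ Finset.Icc 1 s →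
        (IsCoupling γ ((Q 0 y).map f) ((Q i y).map f) ∧ ∫ z, ℓ z ∂γ < (i : ℝ) * ε) := by
      intro i
      by_cases hi : i ∈ Finset.Icc 1 s
      · obtain ⟨γ, h⟩ := chain i (Finset.mem_Icc.mp hi).1 (Finset.mem_Icc.mp hi).2
        exact ⟨γ, fun _ => h⟩
      · exact ⟨0, fun h => absurd h hi⟩
    choose g hg using Hall
    haveI := hmapprob 0 (Nat.zero_le s) y
    set γmix : Measure (Y × Y) := ∑ i ∈ Finset.Icc 1 s, ENNReal.ofReal (r i) • g i with hγmix
    have hcoup : IsCoupling γmix (((p.map Prod.swap).condKernel y).map f)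
        (((q.map Prod.swap).condKernel y).map f) := by
      constructor
      · rw [hγmix, map_finset_sum_measure measurable_fst]
        have e : ∀ i ∈ Finset.Icc 1 s, (ENNReal.ofReal (r i) • g i).map Prod.fst
            = ENNReal.ofReal (r i) • ((Q 0 y).map f) := by
          intro i hi
          rw [Measure.map_smul, (hg i hi).1.1]
        rw [Finset.sum_congr rfl e, ← Finset.sum_smul,
          ← ENNReal.ofReal_sum_of_nonneg (fun i hi => (hr i hi).1), hrsum,
          ENNReal.ofReal_one, one_smul, hQ0 y]
      · rw [hγmix, map_finset_sum_measure measurable_snd]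
        have e : ∀ i ∈ Finset.Icc 1 s, (ENNReal.ofReal (r i) • g i).map Prod.snd
            = ENNReal.ofReal (r i) • ((Q i y).map f) := by
          intro i hi
          rw [Measure.map_smul, (hg i hi).1.2]
        rw [Finset.sum_congr rfl e, hqdec y, map_finset_sum_measure hf]
        refine (Finset.sum_congr rfl fun i hi => ?_).symm
        rw [Measure.map_smul]
    have hint : ∀ i ∈ Finset.Icc 1 s, Integrable ℓ (ENNReal.ofReal (r i) • g i) := by
      intro i hi
      haveI hgp : IsProbabilityMeasure (g i) := (hg i hi).1.probMeasure
      haveI : IsFiniteMeasure (ENNReal.ofReal (r i) • g i) := by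
        constructor
        rw [Measure.smul_apply, smul_eq_mul]
        exact ENNReal.mul_lt_top ENNReal.ofReal_lt_top (measure_lt_top _ _)
      exact Integrable.of_finite
    have hcost : ∫ z, ℓ z ∂γmix = ∑ i ∈ Finset.Icc 1 s, r i * ∫ z, ℓ z ∂(g i) := by
      rw [hγmix, integral_finset_sum_measure hint]
      refine Finset.sum_congr rfl fun i hi => ?_
      rw [integral_smul_measure, ENNReal.toReal_ofReal (hr i hi).1, smul_eq_mul]
    have hsum_lt : ∑ i ∈ Finset.Icc 1 s, r i * ∫ z, ℓ z ∂(g i)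
        < ∑ i ∈ Finset.Icc 1 s, r i * ((i : ℝ) * ε) := by
      obtain ⟨i₀, hi₀, hri₀⟩ : ∃ i ∈ Finset.Icc 1 s, 0 < r i := by
        by_contra hcon
        push_neg at hcon
        have hzero : ∑ i ∈ Finset.Icc 1 s, r i = 0 :=
          Finset.sum_eq_zero fun i hi => le_antisymm (hcon i hi) (hr i hi).1
        rw [hrsum] at hzero
        norm_num at hzero
      refine Finset.sum_lt_sum (fun i hi => ?_) ⟨i₀, hi₀, ?_⟩
      · exact mul_le_mul_of_nonneg_left ((hg i hi).2).le (hr i hi).1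
      · exact mul_lt_mul_of_pos_left ((hg i₀ hi₀).2) hri₀
    have hsum_le : ∑ i ∈ Finset.Icc 1 s, r i * ((i : ℝ) * ε) ≤ B := by
      have step1 : ∑ i ∈ Finset.Icc 1 s, r i * ((i : ℝ) * ε)
          ≤ ∑ i ∈ Finset.Icc 1 s, a * ((i : ℝ) * ε) :=
        Finset.sum_le_sum fun i hi => mul_le_mul_of_nonneg_right (hr i hi).2
          (mul_nonneg (Nat.cast_nonneg i) hε.le)
      have step2 : ∑ i ∈ Finset.Icc 1 s, a * ((i : ℝ) * ε)
          = a * ε * ((s : ℝ) * ((s : ℝ) + 1) / 2) := by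
        have : ∀ i ∈ Finset.Icc 1 s, a * ((i : ℝ) * ε) = (a * ε) * (i : ℝ) := by
          intro i _; ring
        rw [Finset.sum_congr rfl this, ← Finset.mul_sum, sum_Icc_cast_real]
      calc ∑ i ∈ Finset.Icc 1 s, r i * ((i : ℝ) * ε)
          ≤ ∑ i ∈ Finset.Icc 1 s, a * ((i : ℝ) * ε) := step1
        _ = a * ε * ((s : ℝ) * ((s : ℝ) + 1) / 2) := step2
        _ = B := by rw [hB]; ring
    have hWle : W1 ℓ (((p.map Prod.swap).condKernel y).map f)
        (((q.map Prod.swap).condKernel y).map f) ≤ ∫ z, ℓ z ∂γmix :=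
      W1_le_cost hℓnn hcoup
    have hc2 : ∫ z, ℓ z ∂γmix < B := by
      rw [hcost]
      exact lt_of_lt_of_le hsum_lt hsum_le
    exact lt_of_le_of_lt hWle hc2
  obtain ⟨y₀, hy₀⟩ := Finite.exists_max (fun y : Y =>
    W1 ℓ (((p.map Prod.swap).condKernel y).map f) (((q.map Prod.swap).condKernel y).map f))
  have hsup : (⨆ y : Y, W1 ℓ (((p.map Prod.swap).condKernel y).map f)
      (((q.map Prod.swap).condKernel y).map f))
      ≤ W1 ℓ (((p.map Prod.swap).condKernel y₀).map f)
        (((q.map Prod.swap).condKernel y₀).map f) := ciSup_le hy₀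
  have hsupB := hsup.trans_lt (key y₀)
  exact ⟨add_lt_add hb hsupB, hsupB⟩
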